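/- Define a_k and ε_k as above, and let λ_k² = (a_k + a_{k+2} + √((a_k - a_{k+2})² + 4ε_k²))/2 be the larger eigenvalue of A_k = [[a_k, ε_k],[ε_k, a_{k+2}]]. Then for every integer k ≥ 1, λ_k² < 3/5. -/
import Mathlib

noncomputable def d (k : ℕ) : ℝ := ((k : ℝ) - 2) ^ 2 * ((k : ℝ) + 2) / (4 * (k : ℝ) ^ 2)

noncomputable def a (k : ℕ) : ℝ := (d k - d (k + 2)) ^ 2

noncomputable def eps (k : ℕ) : ℝ :=
  -2 * d (k + 2) ^ 2 + d k * d (k + 2) + d (k + 2) * d (k + 4)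

set_option maxHeartbeats 1000000 in
lemma aux_nAp (t : ℝ) (ht : 0 ≤ t) : (0:ℝ) < 394813440000 + 23328718848000 * t + 81839141683200 * t ^ 2 + 141455759769600 * t ^ 3 + 161532297347072 * t ^ 4 + 138493202268160 * t ^ 5 + 94271183519744 * t ^ 6 + 51551379914752 * t ^ 7 + 22440096432128 * t ^ 8 + 7664532717568 * t ^ 9 + 2024842723328 * t ^ 10 + 407328784384 * t ^ 11 + 61095542784 * t ^ 12 + 6612320256 * t ^ 13 + 488112128 * t ^ 14 + 22020096 * t ^ 15 + 458752 * t ^ 16 := by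
  linarith [pow_nonneg ht 2, pow_nonneg ht 3, pow_nonneg ht 4, pow_nonneg ht 5, pow_nonneg ht 6, pow_nonneg ht 7, pow_nonneg ht 8, pow_nonneg ht 9, pow_nonneg ht 10, pow_nonneg ht 11, pow_nonneg ht 12, pow_nonneg ht 13, pow_nonneg ht 14, pow_nonneg ht 15, pow_nonneg ht 16]

set_option maxHeartbeats 1000000 in
lemma aux_nAp' (x : ℝ) (hx : 1 ≤ x) : (0:ℝ) < -343597383680 + -1374389534720 * x + -2104533975040 * x ^ 2 + -1181116006400 * x ^ 3 + 683705106432 * x ^ 4 + 1665642004480 * x ^ 5 + 1409353252864 * x ^ 6 + 811480383488 * x ^ 7 + 430218149888 * x ^ 8 + 233740173312 * x ^ 9 + 111555903488 * x ^ 10 + 40324038656 * x ^ 11 + 10369368064 * x ^ 12 + 1833959424 * x ^ 13 + 212860928 * x ^ 14 + 14680064 * x ^ 15 + 458752 * x ^ 16 := by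
  have h := aux_nAp (x - 1) (by linarith)
  linarith [h]

set_option maxHeartbeats 1000000 in
lemma aux_nAm (t : ℝ) (ht : 0 ≤ t) : (0:ℝ) < 2040422400000 + 33782759424000 * t + 110985176678400 * t ^ 2 + 188324149985280 * t ^ 3 + 209484700188672 * t ^ 4 + 170786669199360 * t ^ 5 + 108329593995264 * t ^ 6 + 55003334049792 * t ^ 7 + 22519374020608 * t ^ 8 + 7390067949568 * t ^ 9 + 1917043867648 * t ^ 10 + 385413545984 * t ^ 11 + 58458374144 * t ^ 12 + 6434062336 * t ^ 13 + 482869248 * t ^ 14 + 22020096 * t ^ 15 + 458752 * t ^ 16 := by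
  linarith [pow_nonneg ht 2, pow_nonneg ht 3, pow_nonneg ht 4, pow_nonneg ht 5, pow_nonneg ht 6, pow_nonneg ht 7, pow_nonneg ht 8, pow_nonneg ht 9, pow_nonneg ht 10, pow_nonneg ht 11, pow_nonneg ht 12, pow_nonneg ht 13, pow_nonneg ht 14, pow_nonneg ht 15, pow_nonneg ht 16]

set_option maxHeartbeats 1000000 in
lemma aux_nAm' (x : ℝ) (hx : 1 ≤ x) : (0:ℝ) < -343597383680 + -1374389534720 * x + -2104533975040 * x ^ 2 + -1181116006400 * x ^ 3 + 769604452352 * x ^ 4 + 1987764551680 * x ^ 5 + 1919380619264 * x ^ 6 + 1253056708608 * x ^ 7 + 653019578368 * x ^ 8 + 295144783872 * x ^ 9 + 116505182208 * x ^ 10 + 38059114496 * x ^ 11 + 9572450304 * x ^ 12 + 1729101824 * x ^ 13 + 207618048 * x ^ 14 + 14680064 * x ^ 15 + 458752 * x ^ 16 := by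
  have h := aux_nAm (x - 1) (by linarith)
  linarith [h]

set_option maxHeartbeats 1000000 in
lemma aux_nBp (t : ℝ) (ht : 0 ≤ t) : (0:ℝ) < 1105716510720 + 8934842695680 * t + 32718032732160 * t ^ 2 + 71997896785920 * t ^ 3 + 106509645381632 * t ^ 4 + 112321154252800 * t ^ 5 + 87400284422144 * t ^ 6 + 51248928653312 * t ^ 7 + 22923143938048 * t ^ 8 + 7862786981888 * t ^ 9 + 2065842044928 * t ^ 10 + 412340977664 * t ^ 11 + 61441572864 * t ^ 12 + 6622806016 * t ^ 13 + 488112128 * t ^ 14 + 22020096 * t ^ 15 + 458752 * t ^ 16 := by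
  linarith [pow_nonneg ht 2, pow_nonneg ht 3, pow_nonneg ht 4, pow_nonneg ht 5, pow_nonneg ht 6, pow_nonneg ht 7, pow_nonneg ht 8, pow_nonneg ht 9, pow_nonneg ht 10, pow_nonneg ht 11, pow_nonneg ht 12, pow_nonneg ht 13, pow_nonneg ht 14, pow_nonneg ht 15, pow_nonneg ht 16]

set_option maxHeartbeats 1000000 in
lemma aux_nBp' (x : ℝ) (hx : 1 ≤ x) : (0:ℝ) < -3489660928 * x ^ 4 + 20132659200 * x ^ 5 + 123547418624 * x ^ 6 + 259845521408 * x ^ 7 + 304724574208 * x ^ 8 + 229042552832 * x ^ 9 + 117260156928 * x ^ 10 + 42001760256 * x ^ 11 + 10579083264 * x ^ 12 + 1844445184 * x ^ 13 + 212860928 * x ^ 14 + 14680064 * x ^ 15 + 458752 * x ^ 16 := by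
  have h := aux_nBp (x - 1) (by linarith)
  linarith [h]

set_option maxHeartbeats 1000000 in
lemma aux_nBm (t : ℝ) (ht : 0 ≤ t) : (0:ℝ) < 2751325470720 + 19388883271680 * t + 61864067727360 * t ^ 2 + 118866287001600 * t ^ 3 + 154462048223232 * t ^ 4 + 144614621184000 * t ^ 5 + 101458694897664 * t ^ 6 + 54700882788352 * t ^ 7 + 23002421526528 * t ^ 8 + 7588322213888 * t ^ 9 + 1958043189248 * t ^ 10 + 390425739264 * t ^ 11 + 58804404224 * t ^ 12 + 6444548096 * t ^ 13 + 482869248 * t ^ 14 + 22020096 * t ^ 15 + 458752 * t ^ 16 := by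
  linarith [pow_nonneg ht 2, pow_nonneg ht 3, pow_nonneg ht 4, pow_nonneg ht 5, pow_nonneg ht 6, pow_nonneg ht 7, pow_nonneg ht 8, pow_nonneg ht 9, pow_nonneg ht 10, pow_nonneg ht 11, pow_nonneg ht 12, pow_nonneg ht 13, pow_nonneg ht 14, pow_nonneg ht 15, pow_nonneg ht 16]

set_option maxHeartbeats 1000000 in
lemma aux_nBm' (x : ℝ) (hx : 1 ≤ x) : (0:ℝ) < 82409684992 * x ^ 4 + 342255206400 * x ^ 5 + 633574785024 * x ^ 6 + 701421846528 * x ^ 7 + 527526002688 * x ^ 8 + 290447163392 * x ^ 9 + 122209435648 * x ^ 10 + 39736836096 * x ^ 11 + 9782165504 * x ^ 12 + 1739587584 * x ^ 13 + 207618048 * x ^ 14 + 14680064 * x ^ 15 + 458752 * x ^ 16 := by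
  have h := aux_nBm (x - 1) (by linarith)
  linarith [h]

set_option maxHeartbeats 2000000 in
theorem lambda2_upper_bound (k : ℕ) (hk : 1 ≤ k) :
    (a k + a (k + 2) + Real.sqrt ((a k - a (k + 2)) ^ 2 + 4 * eps k ^ 2)) / 2 < 3 / 5 := by
  have hx : (1:ℝ) ≤ (k:ℝ) := by exact_mod_cast hk
  set x : ℝ := (k:ℝ) with hxdef
  have hx0 : (0:ℝ) < x := by linarith
  have h2 : (0:ℝ) < x + 2 := by linarith
  have h4 : (0:ℝ) < x + 4 := by linarith
  have hx0' : x ≠ 0 := ne_of_gt hx0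
  have h2' : x + 2 ≠ 0 := ne_of_gt h2
  have h4' : x + 4 ≠ 0 := ne_of_gt h4
  have hden : (0:ℝ) < 1310720 * x ^ 4 * (x + 2) ^ 8 * (x + 4) ^ 4 :=
    mul_pos (mul_pos (mul_pos (by norm_num) (pow_pos hx0 4)) (pow_pos h2 8)) (pow_pos h4 4)
  have q_nAp : (3:ℝ)/5 - a k - eps k = (-343597383680 + -1374389534720 * x + -2104533975040 * x ^ 2 + -1181116006400 * x ^ 3 + 683705106432 * x ^ 4 + 1665642004480 * x ^ 5 + 1409353252864 * x ^ 6 + 811480383488 * x ^ 7 + 430218149888 * x ^ 8 + 233740173312 * x ^ 9 + 111555903488 * x ^ 10 + 40324038656 * x ^ 11 + 10369368064 * x ^ 12 + 1833959424 * x ^ 13 + 212860928 * x ^ 14 + 14680064 * x ^ 15 + 458752 * x ^ 16) / (1310720 * x ^ 4 * (x + 2) ^ 8 * (x + 4) ^ 4) := by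
    simp only [a, eps, d]
    push_cast
    rw [← hxdef]
    field_simp
    ring
  have h_nAp : (0:ℝ) < (3:ℝ)/5 - a k - eps k := by
    rw [q_nAp]; exact div_pos (aux_nAp' x hx) hden
  have q_nAm : (3:ℝ)/5 - a k + eps k = (-343597383680 + -1374389534720 * x + -2104533975040 * x ^ 2 + -1181116006400 * x ^ 3 + 769604452352 * x ^ 4 + 1987764551680 * x ^ 5 + 1919380619264 * x ^ 6 + 1253056708608 * x ^ 7 + 653019578368 * x ^ 8 + 295144783872 * x ^ 9 + 116505182208 * x ^ 10 + 38059114496 * x ^ 11 + 9572450304 * x ^ 12 + 1729101824 * x ^ 13 + 207618048 * x ^ 14 + 14680064 * x ^ 15 + 458752 * x ^ 16) / (1310720 * x ^ 4 * (x + 2) ^ 8 * (x + 4) ^ 4) := by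
    simp only [a, eps, d]
    push_cast
    rw [← hxdef]
    field_simp
    ring
  have h_nAm : (0:ℝ) < (3:ℝ)/5 - a k + eps k := by
    rw [q_nAm]; exact div_pos (aux_nAm' x hx) hden
  have q_nBp : (3:ℝ)/5 - a (k+2) - eps k = (-3489660928 * x ^ 4 + 20132659200 * x ^ 5 + 123547418624 * x ^ 6 + 259845521408 * x ^ 7 + 304724574208 * x ^ 8 + 229042552832 * x ^ 9 + 117260156928 * x ^ 10 + 42001760256 * x ^ 11 + 10579083264 * x ^ 12 + 1844445184 * x ^ 13 + 212860928 * x ^ 14 + 14680064 * x ^ 15 + 458752 * x ^ 16) / (1310720 * x ^ 4 * (x + 2) ^ 8 * (x + 4) ^ 4) := by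
    simp only [a, eps, d]
    push_cast
    rw [← hxdef]
    field_simp
    ring
  have h_nBp : (0:ℝ) < (3:ℝ)/5 - a (k+2) - eps k := by
    rw [q_nBp]; exact div_pos (aux_nBp' x hx) hden
  have q_nBm : (3:ℝ)/5 - a (k+2) + eps k = (82409684992 * x ^ 4 + 342255206400 * x ^ 5 + 633574785024 * x ^ 6 + 701421846528 * x ^ 7 + 527526002688 * x ^ 8 + 290447163392 * x ^ 9 + 122209435648 * x ^ 10 + 39736836096 * x ^ 11 + 9782165504 * x ^ 12 + 1739587584 * x ^ 13 + 207618048 * x ^ 14 + 14680064 * x ^ 15 + 458752 * x ^ 16) / (1310720 * x ^ 4 * (x + 2) ^ 8 * (x + 4) ^ 4) := by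
    simp only [a, eps, d]
    push_cast
    rw [← hxdef]
    field_simp
    ring
  have h_nBm : (0:ℝ) < (3:ℝ)/5 - a (k+2) + eps k := by
    rw [q_nBm]; exact div_pos (aux_nBm' x hx) hden
  have hSpos : (0:ℝ) < (6:ℝ)/5 - (a k + a (k+2)) := by linarith
  have key : Real.sqrt ((a k - a (k + 2)) ^ 2 + 4 * eps k ^ 2) <
      (6:ℝ)/5 - (a k + a (k+2)) := by
    rw [Real.sqrt_lt' hSpos]
    nlinarith [mul_pos h_nAp h_nBm, mul_pos h_nAm h_nBp]
  linarith [key]
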